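/- Let V: ℝ^m → ℝ be twice continuously differentiable and convex. Let L be the smallest constant such that ‖∇_j V(x_j, x_{-j}) - ∇_j V(x_j, x'_{-j})‖ ≤ L‖x_{-j} - x'_{-j}‖ for all j, and let L_r be the smallest constant such that ‖∇V(y_j, x_{-j}) - ∇V(z_j, x_{-j})‖ ≤ L_r‖y_j - z_j‖ for all j. Then L ≤ √(1 - 1/m) · L_r. -/

import Mathlib

open scoped RealInnerProductSpace
open Filter Set Topology

/-- A monotone real function has a nonnegative derivative. -/
private lemma aux_deriv_nonneg {ψ : ℝ → ℝ} {c : ℝ} (hmono : Monotone ψ)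
    (hd : HasDerivAt ψ c 0) : 0 ≤ c := by
  have h := hasDerivAt_iff_tendsto_slope.mp hd
  have h2 : Tendsto (slope ψ 0) (𝓝[>] 0) (𝓝 c) :=
    h.mono_left (nhdsWithin_mono 0 (fun x hx => ne_of_gt hx))
  refine ge_of_tendsto h2 ?_
  filter_upwards [self_mem_nhdsWithin] with t (ht : (0:ℝ) < t)
  rw [slope_def_field]
  have h0 : ψ 0 ≤ ψ t := hmono ht.le
  exact div_nonneg (by linarith) (by linarith)

/-- The key algebraic estimate. -/
private lemma aux_alg {m : ℕ} (hm : 2 ≤ m) {a p Lr : ℝ} (ha : 0 ≤ a) (hap : a ≤ p)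
    (hp0 : 0 ≤ p) (hpLr : p ≤ Lr)
    (hq : p ^ 2 * p ^ 2 ≤ a * (Real.sqrt m * Lr) * p ^ 2) :
    p ^ 2 - a ^ 2 ≤ (1 - 1 / (m : ℝ)) * Lr ^ 2 := by
  have hm' : (2:ℝ) ≤ (m:ℝ) := by exact_mod_cast hm
  have hmpos : (0:ℝ) < (m:ℝ) := by linarith
  have hLr0 : 0 ≤ Lr := le_trans hp0 hpLr
  set s : ℝ := Real.sqrt m with hs
  have hs2 : s ^ 2 = (m:ℝ) := Real.sq_sqrt (by positivity)
  have hs0 : 0 ≤ s := Real.sqrt_nonneg _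
  have key : (m:ℝ) * (p ^ 2 - a ^ 2) ≤ ((m:ℝ) - 1) * Lr ^ 2 := by
    rcases le_or_gt (s * a) Lr with hcase | hcase
    · rcases eq_or_lt_of_le hp0 with hp | hp
      · have hpz : p = 0 := hp.symm
        have haz : a = 0 := le_antisymm (hpz ▸ hap) ha
        rw [hpz, haz]
        nlinarith
      · have hq' : p ^ 2 ≤ a * (s * Lr) := by
          have hp2 : 0 < p ^ 2 := by positivity
          exact le_of_mul_le_mul_right (by nlinarith) hp2
        have hprod : 0 ≤ (Lr - s * a) * (((m:ℝ) - 1) * Lr - s * a) := by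
          apply mul_nonneg (by linarith)
          have : Lr ≤ ((m:ℝ) - 1) * Lr := by nlinarith
          linarith
        nlinarith [hs2, hq', hprod]
    · have h1 : Lr ^ 2 ≤ (m:ℝ) * a ^ 2 := by nlinarith [hs2]
      have h2 : p ^ 2 ≤ Lr ^ 2 := by nlinarith
      nlinarith
  have h3 : p ^ 2 - a ^ 2 ≤ ((m:ℝ) - 1) * Lr ^ 2 / (m:ℝ) :=
    (le_div_iff₀ hmpos).2 (by linarith)
  have h4 : (1 - 1 / (m : ℝ)) * Lr ^ 2 = ((m:ℝ) - 1) * Lr ^ 2 / (m:ℝ) := by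
    field_simp
  rw [h4]; exact h3

/-- The `j`-th partial derivative (partial gradient for 1-dimensional blocks) of `V`. -/
noncomputable def pgrad {m : ℕ} (V : EuclideanSpace ℝ (Fin m) → ℝ)
    (j : Fin m) (x : EuclideanSpace ℝ (Fin m)) : ℝ :=
  fderiv ℝ V x (EuclideanSpace.single j 1)

/-- `L` is a cross-block Lipschitz constant: changing only the off-`j` coordinates
changes `∂_j V` by at most `L` times the Euclidean distance. -/
def CrossLip {m : ℕ} (V : EuclideanSpace ℝ (Fin m) → ℝ) (L : ℝ) : Prop :=
  ∀ j : Fin m, ∀ x x' : EuclideanSpace ℝ (Fin m), x j = x' j →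
    |pgrad V j x - pgrad V j x'| ≤ L * ‖x - x'‖

/-- `Lr` is a restricted Lipschitz constant: changing only the `j`-th coordinate
changes the full gradient `∇V` by at most `Lr` times the distance. -/
def RestrLip {m : ℕ} (V : EuclideanSpace ℝ (Fin m) → ℝ) (Lr : ℝ) : Prop :=
  ∀ j : Fin m, ∀ x x' : EuclideanSpace ℝ (Fin m), (∀ i, i ≠ j → x i = x' i) →
    ‖gradient V x - gradient V x'‖ ≤ Lr * ‖x - x'‖

set_option maxHeartbeats 1000000 in
/-- for a twice continuously differentiable convex `V : ℝ^m → ℝ`, if `L` is the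
smallest cross-block Lipschitz constant of the partial gradients and `Lr` the smallest
restricted Lipschitz constant of the full gradient, then `L ≤ √(1 - 1/m) · Lr`. -/
theorem stmt1 {m : ℕ} (hm : 2 ≤ m) (V : EuclideanSpace ℝ (Fin m) → ℝ)
    (hV : ContDiff ℝ 2 V) (hconv : ConvexOn ℝ Set.univ V)
    (L Lr : ℝ)
    (hL : CrossLip V L) (hLmin : ∀ L', CrossLip V L' → L ≤ L')
    (hLr : RestrLip V Lr) (hLrmin : ∀ L', RestrLip V L' → Lr ≤ L') :
    L ≤ Real.sqrt (1 - 1 / (m : ℝ)) * Lr := by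
  classical
  set e : Fin m → EuclideanSpace ℝ (Fin m) := fun j => EuclideanSpace.single j (1:ℝ) with he
  set G : (EuclideanSpace ℝ (Fin m)) → (EuclideanSpace ℝ (Fin m)) := gradient V with hGdef
  -- basic differentiability facts
  have hdV : Differentiable ℝ V := (hV.of_le one_le_two).differentiable one_ne_zero
  have hf2 : ContDiff ℝ 1 (fderiv ℝ V) := hV.fderiv_right (le_refl 2)
  have hf2' : Differentiable ℝ (fderiv ℝ V) := hf2.differentiable one_ne_zero
  have hGdiff : Differentiable ℝ G := by
    have hG : G = fun y =>
        (PiLp.continuousLinearEquiv 2 ℝ (fun _ : Fin m => ℝ)).symm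
          (fun i => fderiv ℝ V y (e i)) := by
      funext y; ext i
      have h1 : ⟪G y, e i⟫ = fderiv ℝ V y (e i) := InnerProductSpace.toDual_symm_apply
      simpa [he, EuclideanSpace.inner_single_right] using h1
    rw [hG]
    refine ((PiLp.continuousLinearEquiv 2 ℝ
      (fun _ : Fin m => ℝ)).symm.toContinuousLinearMap.differentiable).comp ?_
    rw [differentiable_pi]
    intro i
    exact (ContinuousLinearMap.apply ℝ ℝ (e i)).differentiable.comp hf2'
  set H : (EuclideanSpace ℝ (Fin m)) → (EuclideanSpace ℝ (Fin m)) →L[ℝ] (EuclideanSpace ℝ (Fin m)) := fun z => fderiv ℝ G z with hHdef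
  -- the bridge between the Hessian (as fderiv of gradient) and the second fderiv
  have hbridge : ∀ z u w : EuclideanSpace ℝ (Fin m), ⟪H z u, w⟫ = fderiv ℝ (fderiv ℝ V) z u w := by
    intro z u w
    have h1 : HasFDerivAt (fun y => ⟪w, G y⟫)
        ((innerSL ℝ w).comp (H z)) z :=
      (innerSL ℝ w).hasFDerivAt.comp z (hGdiff z).hasFDerivAt
    have h2 : HasFDerivAt (fun y => (fderiv ℝ V y) w)
        ((ContinuousLinearMap.apply ℝ ℝ w).comp (fderiv ℝ (fderiv ℝ V) z)) z :=
      (ContinuousLinearMap.apply ℝ ℝ w).hasFDerivAt.comp z (hf2' z).hasFDerivAt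
    have heq : (fun y => ⟪w, G y⟫) = (fun y => (fderiv ℝ V y) w) := by
      funext y
      rw [real_inner_comm]
      exact InnerProductSpace.toDual_symm_apply
    rw [heq] at h1
    have happ := DFunLike.congr_fun (h1.unique h2) u
    simpa [real_inner_comm, mul_comm] using happ
  -- symmetry of the Hessian
  have hsym : ∀ z u w : EuclideanSpace ℝ (Fin m), ⟪H z u, w⟫ = ⟪u, H z w⟫ := by
    intro z u w
    have hs := (hV.contDiffAt (x := z)).isSymmSndFDerivAt (by simp [minSmoothness_of_isRCLikeNormedField])
    rw [hbridge z u w, hs u w, ← hbridge z w u, real_inner_comm]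
  -- derivative of gradient along lines
  have hline : ∀ (y v : EuclideanSpace ℝ (Fin m)) (t : ℝ), HasDerivAt (fun s : ℝ => y + s • v) v t := by
    intro y v t
    simpa using ((hasDerivAt_id t).smul_const v).const_add y
  have hlineG : ∀ (y v : EuclideanSpace ℝ (Fin m)) (t : ℝ),
      HasDerivAt (fun s : ℝ => G (y + s • v)) (H (y + t • v) v) t := by
    intro y v t
    exact (hGdiff (y + t • v)).hasFDerivAt.comp_hasDerivAt t (hline y v t)
  have hlineInner : ∀ (w y v : EuclideanSpace ℝ (Fin m)) (t : ℝ),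
      HasDerivAt (fun s : ℝ => ⟪w, G (y + s • v)⟫) ⟪w, H (y + t • v) v⟫ t := by
    intro w y v t
    exact ((innerSL ℝ w).hasFDerivAt.comp_hasDerivAt t (hlineG y v t))
  -- positive semidefiniteness of the Hessian
  have hpsd : ∀ z v : EuclideanSpace ℝ (Fin m), 0 ≤ ⟪v, H z v⟫ := by
    intro z v
    have hmono : Monotone (fun t : ℝ => ⟪v, G (z + t • v)⟫) := by
      have hcomp : ∀ t : ℝ, HasDerivAt (fun s : ℝ => V (z + s • v))
          ⟪v, G (z + t • v)⟫ t := by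
        intro t
        have h := (hdV (z + t • v)).hasFDerivAt.comp_hasDerivAt t (hline z v t)
        have hg : (fderiv ℝ V (z + t • v)) v = ⟪v, G (z + t • v)⟫ := by
          rw [real_inner_comm]
          exact (InnerProductSpace.toDual_symm_apply).symm
        rwa [hg] at h
      have hcv : ConvexOn ℝ Set.univ (fun s : ℝ => V (z + s • v)) := by
        have h := hconv.comp_affineMap (AffineMap.lineMap z (z + v))
        have he2 : (V ∘ (AffineMap.lineMap z (z + v))) = fun s : ℝ => V (z + s • v) := by
          funext s; simp [AffineMap.lineMap_apply, add_comm]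
        rw [← he2]
        simpa using h
      have hmono' := hcv.monotoneOn_deriv (fun x _ => (hcomp x).differentiableAt)
      intro s t hst
      have h1 := hmono' (mem_univ s) (mem_univ t) hst
      rwa [(hcomp s).deriv, (hcomp t).deriv] at h1
    have hd0 : HasDerivAt (fun t : ℝ => ⟪v, G (z + t • v)⟫) ⟪v, H z v⟫ 0 := by
      have := hlineInner v z v 0
      simpa using this
    exact aux_deriv_nonneg hmono hd0
  -- Lr is nonnegative
  have hLr0 : 0 ≤ Lr := by
    have hm0 : 0 < m := by omega
    set j : Fin m := ⟨0, hm0⟩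
    have h := hLr j 0 (e j) (fun i hi => by simp [he, EuclideanSpace.single_apply, hi])
    have hn : ‖(0 : EuclideanSpace ℝ (Fin m)) - e j‖ = 1 := by
      rw [zero_sub, norm_neg]
      simp [he]
    rw [hn, mul_one] at h
    exact le_trans (norm_nonneg _) h
  -- column bound on the Hessian
  have hcol : ∀ (z : EuclideanSpace ℝ (Fin m)) (j : Fin m), ‖H z (e j)‖ ≤ Lr := by
    intro z j
    have hlip : LipschitzWith (Real.toNNReal Lr) (fun t : ℝ => G (z + t • e j)) := by
      apply LipschitzWith.of_dist_le_mul
      intro s t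
      rw [dist_eq_norm, dist_eq_norm]
      have hco : ∀ i, i ≠ j → (z + s • e j) i = (z + t • e j) i := by
        intro i hi
        simp [he, EuclideanSpace.single_apply, hi]
      have hsub : (z + s • e j) - (z + t • e j) = (s - t) • e j := by
        module
      have h := hLr j (z + s • e j) (z + t • e j) hco
      rw [hsub] at h
      have hns : ‖(s - t) • e j‖ = ‖s - t‖ := by
        rw [norm_smul]
        simp [he]
      rw [hns] at h
      simpa [Real.coe_toNNReal Lr hLr0, Real.norm_eq_abs] using h
    have hd : HasDerivAt (fun t : ℝ => G (z + t • e j)) (H z (e j)) 0 := by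
      have := hlineG z (e j) 0
      simpa using this
    have hF := hasDerivAt_iff_hasFDerivAt.1 hd
    have hle := hF.le_of_lipschitz hlip
    have happ : (ContinuousLinearMap.smulRight (1 : ℝ →L[ℝ] ℝ) (H z (e j))) 1 = H z (e j) := by
      simp
    calc ‖H z (e j)‖
        = ‖(ContinuousLinearMap.smulRight (1 : ℝ →L[ℝ] ℝ) (H z (e j))) 1‖ := by rw [happ]
      _ ≤ ‖ContinuousLinearMap.smulRight (1 : ℝ →L[ℝ] ℝ) (H z (e j))‖ * ‖(1:ℝ)‖ :=
          ContinuousLinearMap.le_opNorm _ _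
      _ ≤ Lr * 1 := by
          apply mul_le_mul (le_trans hle (le_of_eq (Real.coe_toNNReal Lr hLr0)))
            (by simp) (norm_nonneg _) hLr0
      _ = Lr := mul_one Lr
  -- operator norm bound on the Hessian
  have hopn : ∀ (z v : EuclideanSpace ℝ (Fin m)), ‖H z v‖ ≤ Real.sqrt m * Lr * ‖v‖ := by
    intro z v
    have hcomp : ∀ i : Fin m, ‖(H z v) i‖ ^ 2 ≤ (Lr * ‖v‖) ^ 2 := by
      intro i
      have h1 : (H z v) i = ⟪H z v, e i⟫ := by
        simp [he, EuclideanSpace.inner_single_right]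
      have h2 : |⟪H z v, e i⟫| ≤ Lr * ‖v‖ := by
        rw [hsym z v (e i)]
        calc |⟪v, H z (e i)⟫| ≤ ‖v‖ * ‖H z (e i)‖ := abs_real_inner_le_norm _ _
          _ ≤ ‖v‖ * Lr := by
              exact mul_le_mul_of_nonneg_left (hcol z i) (norm_nonneg _)
          _ = Lr * ‖v‖ := mul_comm _ _
      rw [h1, Real.norm_eq_abs]
      exact pow_le_pow_left₀ (abs_nonneg _) h2 2
    rw [EuclideanSpace.norm_eq]
    have hsum : ∑ i, ‖(H z v) i‖ ^ 2 ≤ (m : ℝ) * (Lr * ‖v‖) ^ 2 := by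
      calc ∑ i, ‖(H z v) i‖ ^ 2 ≤ ∑ _i : Fin m, (Lr * ‖v‖) ^ 2 :=
            Finset.sum_le_sum (fun i _ => hcomp i)
        _ = (m : ℝ) * (Lr * ‖v‖) ^ 2 := by simp [Finset.sum_const, mul_comm]
    calc Real.sqrt (∑ i, ‖(H z v) i‖ ^ 2) ≤ Real.sqrt ((m : ℝ) * (Lr * ‖v‖) ^ 2) :=
          Real.sqrt_le_sqrt hsum
      _ = Real.sqrt m * (Lr * ‖v‖) := by
          rw [Real.sqrt_mul (by positivity), Real.sqrt_sq (by positivity)]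
      _ = Real.sqrt m * Lr * ‖v‖ := by ring
  -- the key pointwise bound on the off-diagonal part of a Hessian column
  set K : ℝ := Real.sqrt (1 - 1 / (m : ℝ)) * Lr with hKdef
  have hm1 : (0:ℝ) ≤ 1 - 1 / (m : ℝ) := by
    have hm' : (2:ℝ) ≤ (m:ℝ) := by exact_mod_cast hm
    have : 1 / (m:ℝ) ≤ 1 := by
      apply div_le_one_of_le₀ <;> linarith
    linarith
  have hK0 : 0 ≤ K := mul_nonneg (Real.sqrt_nonneg _) hLr0
  have hkey : ∀ (z : EuclideanSpace ℝ (Fin m)) (j : Fin m),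
      ‖H z (e j) - ⟪H z (e j), e j⟫ • e j‖ ≤ K := by
    intro z j
    set p := H z (e j) with hp
    set a : ℝ := ⟪p, e j⟫ with ha
    have hej : ‖e j‖ = 1 := by simp [he]
    have ha0 : 0 ≤ a := by
      rw [ha, real_inner_comm]
      exact hpsd z (e j)
    have hap : a ≤ ‖p‖ := by
      calc a ≤ ‖p‖ * ‖e j‖ := real_inner_le_norm p (e j)
        _ = ‖p‖ := by rw [hej, mul_one]
    have hpLr : ‖p‖ ≤ Lr := hcol z j
    -- Cauchy–Schwarz for the Hessian quadratic form via the discriminant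
    have hquad : ∀ t : ℝ, 0 ≤ ⟪p, H z p⟫ * (t * t) + (2 * ‖p‖ ^ 2) * t + a := by
      intro t
      have h0 := hpsd z (e j + t • p)
      have hexp : ⟪e j + t • p, H z (e j + t • p)⟫ =
          ⟪p, H z p⟫ * (t * t) + (2 * ‖p‖ ^ 2) * t + a := by
        rw [map_add, map_smul]
        rw [inner_add_left, inner_add_right, inner_add_right]
        rw [real_inner_smul_left, real_inner_smul_left, real_inner_smul_right,
          real_inner_smul_right]
        have h1 : ⟪e j, H z p⟫ = ‖p‖ ^ 2 := by
          rw [← hsym z (e j) p, ← hp, real_inner_self_eq_norm_sq]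
        have h2 : ⟪p, H z (e j)⟫ = ‖p‖ ^ 2 := by
          rw [← hp, real_inner_self_eq_norm_sq]
        rw [h1, h2, ← hp, real_inner_comm p (e j), ← ha]
        ring
      rw [← hexp]
      exact h0
    have hdisc := discrim_le_zero hquad
    rw [discrim] at hdisc
    have hcs : ‖p‖ ^ 2 * ‖p‖ ^ 2 ≤ a * (Real.sqrt m * Lr) * ‖p‖ ^ 2 := by
      have h1 : ⟪p, H z p⟫ ≤ ‖p‖ * (Real.sqrt m * Lr * ‖p‖) := by
        calc ⟪p, H z p⟫ ≤ ‖p‖ * ‖H z p‖ := real_inner_le_norm _ _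
          _ ≤ ‖p‖ * (Real.sqrt m * Lr * ‖p‖) :=
              mul_le_mul_of_nonneg_left (hopn z p) (norm_nonneg _)
      nlinarith [hdisc, ha0, norm_nonneg p]
    have halg := aux_alg hm ha0 hap (norm_nonneg p) hpLr hcs
    have hq2 : ‖p - a • e j‖ ^ 2 = ‖p‖ ^ 2 - a ^ 2 := by
      rw [norm_sub_sq_real, real_inner_smul_right, ← ha, norm_smul, hej]
      rw [Real.norm_eq_abs, mul_one, sq_abs]
      ring
    have hK2 : K ^ 2 = (1 - 1 / (m : ℝ)) * Lr ^ 2 := by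
      rw [hKdef, mul_pow, Real.sq_sqrt hm1]
    have hle2 : ‖p - a • e j‖ ^ 2 ≤ K ^ 2 := by rw [hq2, hK2]; exact halg
    have := Real.sqrt_le_sqrt hle2
    rwa [Real.sqrt_sq (norm_nonneg _), Real.sqrt_sq hK0] at this
  -- the cross-Lipschitz property with constant K
  have hcross : CrossLip V K := by
    intro j x x' hxj
    set d := x - x' with hd
    have hdj : d j = 0 := by
      simp [hd, hxj]
    have hbound : ∀ y : EuclideanSpace ℝ (Fin m), |⟪e j, H y d⟫| ≤ K * ‖d‖ := by
      intro y
      have h1 : ⟪e j, H y d⟫ = ⟪d, H y (e j)⟫ := by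
        rw [real_inner_comm, hsym]
      set a : ℝ := ⟪H y (e j), e j⟫ with ha
      have h2 : ⟪d, H y (e j)⟫ = ⟪d, H y (e j) - a • e j⟫ := by
        rw [inner_sub_right, real_inner_smul_right]
        have : ⟪d, e j⟫ = d j := by simp [he, EuclideanSpace.inner_single_right]
        rw [this, hdj, mul_zero, sub_zero]
      rw [h1, h2]
      calc |⟪d, H y (e j) - a • e j⟫| ≤ ‖d‖ * ‖H y (e j) - a • e j‖ :=
            abs_real_inner_le_norm _ _
        _ ≤ ‖d‖ * K := mul_le_mul_of_nonneg_left (hkey y j) (norm_nonneg _)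
        _ = K * ‖d‖ := mul_comm _ _
    set ψ : ℝ → ℝ := fun t => ⟪e j, G (x' + t • d)⟫ with hψ
    have hψd : ∀ t : ℝ, HasDerivAt ψ ⟪e j, H (x' + t • d) d⟫ t := fun t =>
      hlineInner (e j) x' d t
    have hmvt := norm_image_sub_le_of_norm_deriv_le_segment'
      (f := ψ) (f' := fun t => ⟪e j, H (x' + t • d) d⟫) (a := 0) (b := 1) (C := K * ‖d‖)
      (fun t _ => (hψd t).hasDerivWithinAt)
      (fun t _ => by rw [Real.norm_eq_abs]; exact hbound _)
      1 (right_mem_Icc.2 zero_le_one)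
    have hψ1 : ψ 1 = pgrad V j x := by
      have hx1 : x' + (1:ℝ) • d = x := by rw [hd, one_smul]; abel
      rw [hψ]
      show ⟪e j, G (x' + (1:ℝ) • d)⟫ = pgrad V j x
      rw [hx1, real_inner_comm]
      exact InnerProductSpace.toDual_symm_apply
    have hψ0 : ψ 0 = pgrad V j x' := by
      rw [hψ]
      show ⟪e j, G (x' + (0:ℝ) • d)⟫ = pgrad V j x'
      rw [zero_smul, add_zero, real_inner_comm]
      exact InnerProductSpace.toDual_symm_apply
    rw [hψ1, hψ0, Real.norm_eq_abs, sub_zero, mul_one] at hmvt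
    exact hmvt
  exact hLmin K hcross
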